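/- Let P, Q be d×d symmetric positive-semidefinite matrices, Γ a k×k symmetric positive-definite matrix, and A a k×d matrix. With C(Q) = Q − Q Aᵀ (A Q Aᵀ + Γ)⁻¹ A Q, one has ‖C(Q) − C(P)‖ ≤ ‖Q − P‖ (1 + ‖A‖² ‖Γ⁻¹‖ (‖Q‖ + ‖P‖) + ‖A‖⁴ ‖Γ⁻¹‖² ‖Q‖ ‖P‖). -/

import Mathlib

open Matrix
open scoped Matrix.Norms.L2Operator MatrixOrder

/-- Operator (spectral) norm of a real matrix, via its action on Euclidean space. -/
noncomputable def opNorm {m n : Type*} [Fintype m] [Fintype n] [DecidableEq n]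
    (A : Matrix m n ℝ) : ℝ :=
  ‖LinearMap.toContinuousLinearMap (Matrix.toEuclideanLin A)‖

/-- Maximum absolute entry of a matrix. -/
noncomputable def maxNorm {m n : Type*} [Fintype m] [Fintype n] (A : Matrix m n ℝ) : ℝ :=
  ⨆ ij : m × n, |A ij.1 ij.2|

lemma opNorm_eq_norm {m n : Type*} [Fintype m] [Fintype n] [DecidableEq n]
    (A : Matrix m n ℝ) : opNorm A = ‖A‖ := rfl

noncomputable def enorm2 {k : ℕ} (x : Fin k → ℝ) : ℝ := ‖(WithLp.equiv 2 (Fin k → ℝ)).symm x‖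

lemma enorm_nonneg' {k : ℕ} (x : Fin k → ℝ) : 0 ≤ enorm2 x := norm_nonneg _

lemma enorm_sq {k : ℕ} (x : Fin k → ℝ) : enorm2 x ^ 2 = x ⬝ᵥ x := by
  rw [enorm2, ← real_inner_self_eq_norm_sq]
  simp only [PiLp.inner_apply, dotProduct, mul_comm]
  simp [sq]

lemma enorm_mulVec_le {k l : ℕ} (M : Matrix (Fin k) (Fin l) ℝ) (x : Fin l → ℝ) :
    enorm2 (M *ᵥ x) ≤ ‖M‖ * enorm2 x := M.l2_opNorm_mulVec _

lemma dot_le_enorm {k : ℕ} (x y : Fin k → ℝ) : x ⬝ᵥ y ≤ enorm2 x * enorm2 y := by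
  have := real_inner_le_norm ((WithLp.equiv 2 (Fin k → ℝ)).symm x) ((WithLp.equiv 2 (Fin k → ℝ)).symm y)
  simpa [PiLp.inner_apply, dotProduct, enorm2, mul_comm] using this

lemma norm_le_of_mulVec {k : ℕ} (M : Matrix (Fin k) (Fin k) ℝ) (c : ℝ) (hc : 0 ≤ c)
    (h : ∀ x, enorm2 (M *ᵥ x) ≤ c * enorm2 x) : ‖M‖ ≤ c := by
  rw [Matrix.cstar_norm_def]
  refine ContinuousLinearMap.opNorm_le_bound _ hc fun x => ?_
  have := h ((WithLp.equiv 2 (Fin k → ℝ)) x)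
  exact this

lemma inv_norm_le {k : ℕ} {Γ S : Matrix (Fin k) (Fin k) ℝ} (hΓ : Γ.PosDef) (hS : S.PosDef)
    (h : ∀ y, y ⬝ᵥ (Γ *ᵥ y) ≤ y ⬝ᵥ (S *ᵥ y)) : ‖S⁻¹‖ ≤ ‖Γ⁻¹‖ := by
  set R := CFC.sqrt Γ with hRdef
  have hRR : R * R = Γ := CFC.sqrt_mul_sqrt_self Γ hΓ.posSemidef.nonneg
  have hRH : Rᴴ = R := (CFC.sqrt_nonneg Γ).posSemidef.1
  have hRunit : IsUnit R.det := by
    have : R.det * R.det = Γ.det := by rw [← det_mul, hRR]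
    have hd := hΓ.det_pos
    apply isUnit_iff_ne_zero.mpr
    intro h0; rw [h0, mul_zero] at this; exact hd.ne' this.symm
  have hGinv : Γ⁻¹ = R⁻¹ * R⁻¹ := by rw [← hRR, Matrix.mul_inv_rev]
  have hninv : ‖R⁻¹‖ ^ 2 = ‖Γ⁻¹‖ := by
    have : (R⁻¹)ᴴ * R⁻¹ = Γ⁻¹ := by rw [Matrix.conjTranspose_nonsing_inv, hRH, hGinv]
    rw [← this, Matrix.l2_opNorm_conjTranspose_mul_self, sq]
  have key : ∀ y : Fin k → ℝ, enorm2 y ^ 2 ≤ ‖Γ⁻¹‖ * (y ⬝ᵥ (S *ᵥ y)) := by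
    intro y
    have h1 : y ⬝ᵥ (Γ *ᵥ y) = (R *ᵥ y) ⬝ᵥ (R *ᵥ y) := by
      have hRT : Rᵀ = R := by
        have := hRH
        rwa [Matrix.conjTranspose_eq_transpose_of_trivial] at this
      rw [← hRR, ← Matrix.mulVec_mulVec, Matrix.dotProduct_mulVec y R,
        ← Matrix.mulVec_transpose, hRT]
    have h2 : enorm2 y ≤ ‖R⁻¹‖ * enorm2 (R *ᵥ y) := by
      have : R⁻¹ *ᵥ (R *ᵥ y) = y := by
        rw [Matrix.mulVec_mulVec, Matrix.nonsing_inv_mul _ hRunit, Matrix.one_mulVec]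
      calc enorm2 y = enorm2 (R⁻¹ *ᵥ (R *ᵥ y)) := by rw [this]
        _ ≤ ‖R⁻¹‖ * enorm2 (R *ᵥ y) := enorm_mulVec_le _ _
    have h3 : enorm2 y ^ 2 ≤ ‖R⁻¹‖ ^ 2 * enorm2 (R *ᵥ y) ^ 2 := by
      rw [← mul_pow]
      exact pow_le_pow_left₀ (enorm_nonneg' y) h2 2
    have h4 : enorm2 (R *ᵥ y) ^ 2 = y ⬝ᵥ (Γ *ᵥ y) := by rw [enorm_sq, h1]
    calc enorm2 y ^ 2 ≤ ‖R⁻¹‖ ^ 2 * (y ⬝ᵥ (Γ *ᵥ y)) := by rw [← h4]; exact h3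
      _ = ‖Γ⁻¹‖ * (y ⬝ᵥ (Γ *ᵥ y)) := by rw [hninv]
      _ ≤ ‖Γ⁻¹‖ * (y ⬝ᵥ (S *ᵥ y)) := mul_le_mul_of_nonneg_left (h y) (norm_nonneg _)
  refine norm_le_of_mulVec _ _ (norm_nonneg _) fun x => ?_
  set y := S⁻¹ *ᵥ x with hy
  have hSy : S *ᵥ y = x := by
    rw [hy, Matrix.mulVec_mulVec, Matrix.mul_nonsing_inv _ ((Matrix.isUnit_iff_isUnit_det S).mp hS.isUnit), Matrix.one_mulVec]
  have hk := key y
  rw [hSy] at hk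
  have hcs : y ⬝ᵥ x ≤ enorm2 y * enorm2 x := dot_le_enorm y x
  by_cases h0 : enorm2 y = 0
  · rw [h0]; exact mul_nonneg (norm_nonneg _) (enorm_nonneg' x)
  · have hpos : 0 < enorm2 y := lt_of_le_of_ne (enorm_nonneg' y) (Ne.symm h0)
    nlinarith [norm_nonneg (Γ⁻¹), enorm_nonneg' x]

lemma norm_one_le_one {n : ℕ} : ‖(1 : Matrix (Fin n) (Fin n) ℝ)‖ ≤ 1 := by
  rw [Matrix.cstar_norm_def, _root_.map_one]
  exact ContinuousLinearMap.norm_id_le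

lemma norm_transpose {m n : Type*} [Fintype m] [Fintype n] [DecidableEq m] [DecidableEq n]
    (A : Matrix m n ℝ) : ‖Aᵀ‖ = ‖A‖ := by
  rw [← Matrix.l2_opNorm_conjTranspose A]; congr 1

set_option maxHeartbeats 1000000 in
lemma factor_ident {d k : ℕ} (P Q : Matrix (Fin d) (Fin d) ℝ)
    (B : Matrix (Fin d) (Fin k) ℝ) (A : Matrix (Fin k) (Fin d) ℝ)
    (X Y SQ SP : Matrix (Fin k) (Fin k) ℝ)
    (hSQ : SQ - SP = A * Q * B - A * P * B)
    (hXu : X * SQ = 1) (hYu : SP * Y = 1) :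
    (Q - Q * B * X * A * Q) - (P - P * B * Y * A * P)
      = (1 - Q * B * X * A) * (Q - P) * (1 - B * Y * A * P) := by
  have key : X * (A * Q * B - A * P * B) * Y = Y - X := by
    calc X * (A * Q * B - A * P * B) * Y = (X * SQ) * Y - X * (SP * Y) := by
          rw [← hSQ]; simp only [Matrix.mul_sub, Matrix.sub_mul, Matrix.mul_assoc]
      _ = Y - X := by rw [hXu, hYu, one_mul, mul_one]
  have expand : (1 - Q * B * X * A) * (Q - P) * (1 - B * Y * A * P)
      = ((Q - Q * B * X * A * Q) - (P - P * B * Y * A * P))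
        + (Q * B * X * A * P - Q * B * Y * A * P
          + Q * B * (X * (A * Q * B - A * P * B) * Y) * (A * P)) := by
    simp only [Matrix.mul_sub, Matrix.sub_mul, Matrix.mul_add, Matrix.add_mul,
      Matrix.mul_one, Matrix.one_mul, Matrix.mul_assoc]
    abel
  rw [expand, key]
  simp only [Matrix.mul_sub, Matrix.sub_mul, Matrix.mul_add, Matrix.add_mul,
    Matrix.mul_one, Matrix.one_mul, Matrix.mul_assoc]
  abel


set_option maxHeartbeats 2000000 in
/-- Continuity of the covariance-update operator
`C(Q) = Q − Q Aᵀ (A Q Aᵀ + Γ)⁻¹ A Q`. -/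
theorem covariance_update_continuity {d k : ℕ}
    (P Q : Matrix (Fin d) (Fin d) ℝ)
    (Γ : Matrix (Fin k) (Fin k) ℝ) (A : Matrix (Fin k) (Fin d) ℝ)
    (hP : P.PosSemidef) (hQ : Q.PosSemidef) (hΓ : Γ.PosDef) :
    opNorm ((Q - Q * Aᵀ * (A * Q * Aᵀ + Γ)⁻¹ * A * Q)
        - (P - P * Aᵀ * (A * P * Aᵀ + Γ)⁻¹ * A * P))
      ≤ opNorm (Q - P) * (1 + opNorm A ^ 2 * opNorm Γ⁻¹ * (opNorm Q + opNorm P)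
          + opNorm A ^ 4 * opNorm Γ⁻¹ ^ 2 * opNorm Q * opNorm P) := by
  simp only [opNorm_eq_norm]
  have hAT : Aᴴ = Aᵀ := Matrix.conjTranspose_eq_transpose_of_trivial A
  -- positive definiteness of the innovation matrices
  have hAQ : (A * Q * Aᵀ).PosSemidef := by rw [← hAT]; exact hQ.mul_mul_conjTranspose_same A
  have hAP : (A * P * Aᵀ).PosSemidef := by rw [← hAT]; exact hP.mul_mul_conjTranspose_same A
  have hSQ : (A * Q * Aᵀ + Γ).PosDef := Matrix.PosDef.posSemidef_add hAQ hΓ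
  have hSP : (A * P * Aᵀ + Γ).PosDef := Matrix.PosDef.posSemidef_add hAP hΓ
  set X := (A * Q * Aᵀ + Γ)⁻¹ with hXdef
  set Y := (A * P * Aᵀ + Γ)⁻¹ with hYdef
  have hXu : X * (A * Q * Aᵀ + Γ) = 1 :=
    Matrix.nonsing_inv_mul _ ((Matrix.isUnit_iff_isUnit_det _).mp hSQ.isUnit)
  have hYu : (A * P * Aᵀ + Γ) * Y = 1 :=
    Matrix.mul_nonsing_inv _ ((Matrix.isUnit_iff_isUnit_det _).mp hSP.isUnit)
  -- the factorization identity
  have ident : (Q - Q * Aᵀ * X * A * Q) - (P - P * Aᵀ * Y * A * P)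
      = (1 - Q * Aᵀ * X * A) * (Q - P) * (1 - Aᵀ * Y * A * P) :=
    factor_ident P Q Aᵀ A X Y (A * Q * Aᵀ + Γ) (A * P * Aᵀ + Γ) (by abel) hXu hYu
  rw [ident]
  -- norm bounds
  have hcompQ : ∀ y, y ⬝ᵥ (Γ *ᵥ y) ≤ y ⬝ᵥ ((A * Q * Aᵀ + Γ) *ᵥ y) := by
    intro y
    rw [Matrix.add_mulVec, dotProduct_add]
    have := hAQ.dotProduct_mulVec_nonneg y
    rw [star_trivial] at this
    linarith
  have hcompP : ∀ y, y ⬝ᵥ (Γ *ᵥ y) ≤ y ⬝ᵥ ((A * P * Aᵀ + Γ) *ᵥ y) := by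
    intro y
    rw [Matrix.add_mulVec, dotProduct_add]
    have := hAP.dotProduct_mulVec_nonneg y
    rw [star_trivial] at this
    linarith
  have hX : ‖X‖ ≤ ‖Γ⁻¹‖ := inv_norm_le hΓ hSQ hcompQ
  have hY : ‖Y‖ ≤ ‖Γ⁻¹‖ := inv_norm_le hΓ hSP hcompP
  have hAn : ‖Aᵀ‖ = ‖A‖ := norm_transpose A
  have hg0 : (0:ℝ) ≤ ‖Γ⁻¹‖ := norm_nonneg _
  have ha0 : (0:ℝ) ≤ ‖A‖ := norm_nonneg _
  have hq0 : (0:ℝ) ≤ ‖Q‖ := norm_nonneg _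
  have hp0 : (0:ℝ) ≤ ‖P‖ := norm_nonneg _
  have hQAXA : ‖Q * Aᵀ * X * A‖ ≤ ‖Q‖ * ‖A‖ ^ 2 * ‖Γ⁻¹‖ := by
    calc ‖Q * Aᵀ * X * A‖ ≤ ‖Q * Aᵀ * X‖ * ‖A‖ := Matrix.l2_opNorm_mul _ _
      _ ≤ (‖Q * Aᵀ‖ * ‖X‖) * ‖A‖ :=
          mul_le_mul_of_nonneg_right (Matrix.l2_opNorm_mul _ _) ha0
      _ ≤ ((‖Q‖ * ‖Aᵀ‖) * ‖X‖) * ‖A‖ :=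
          mul_le_mul_of_nonneg_right (mul_le_mul_of_nonneg_right
            (Matrix.l2_opNorm_mul Q Aᵀ) (norm_nonneg _)) ha0
      _ = (‖Q‖ * ‖A‖ ^ 2) * ‖X‖ := by rw [hAn]; ring
      _ ≤ (‖Q‖ * ‖A‖ ^ 2) * ‖Γ⁻¹‖ := mul_le_mul_of_nonneg_left hX (by positivity)
      _ = ‖Q‖ * ‖A‖ ^ 2 * ‖Γ⁻¹‖ := by ring
  have hAYP : ‖Aᵀ * Y * A * P‖ ≤ ‖A‖ ^ 2 * ‖Γ⁻¹‖ * ‖P‖ := by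
    calc ‖Aᵀ * Y * A * P‖ ≤ ‖Aᵀ * Y * A‖ * ‖P‖ := Matrix.l2_opNorm_mul _ _
      _ ≤ (‖Aᵀ * Y‖ * ‖A‖) * ‖P‖ :=
          mul_le_mul_of_nonneg_right (Matrix.l2_opNorm_mul _ _) hp0
      _ ≤ ((‖Aᵀ‖ * ‖Y‖) * ‖A‖) * ‖P‖ :=
          mul_le_mul_of_nonneg_right (mul_le_mul_of_nonneg_right
            (Matrix.l2_opNorm_mul Aᵀ Y) ha0) hp0
      _ = (‖A‖ ^ 2 * ‖P‖) * ‖Y‖ := by rw [hAn]; ring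
      _ ≤ (‖A‖ ^ 2 * ‖P‖) * ‖Γ⁻¹‖ := mul_le_mul_of_nonneg_left hY (by positivity)
      _ = ‖A‖ ^ 2 * ‖Γ⁻¹‖ * ‖P‖ := by ring
  have hL : ‖(1 : Matrix (Fin d) (Fin d) ℝ) - Q * Aᵀ * X * A‖ ≤ 1 + ‖Q‖ * ‖A‖ ^ 2 * ‖Γ⁻¹‖ := by
    calc ‖(1 : Matrix (Fin d) (Fin d) ℝ) - Q * Aᵀ * X * A‖
        ≤ ‖(1 : Matrix (Fin d) (Fin d) ℝ)‖ + ‖Q * Aᵀ * X * A‖ := norm_sub_le _ _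
      _ ≤ 1 + ‖Q‖ * ‖A‖ ^ 2 * ‖Γ⁻¹‖ := add_le_add norm_one_le_one hQAXA
  have hR : ‖(1 : Matrix (Fin d) (Fin d) ℝ) - Aᵀ * Y * A * P‖ ≤ 1 + ‖A‖ ^ 2 * ‖Γ⁻¹‖ * ‖P‖ := by
    calc ‖(1 : Matrix (Fin d) (Fin d) ℝ) - Aᵀ * Y * A * P‖
        ≤ ‖(1 : Matrix (Fin d) (Fin d) ℝ)‖ + ‖Aᵀ * Y * A * P‖ := norm_sub_le _ _
      _ ≤ 1 + ‖A‖ ^ 2 * ‖Γ⁻¹‖ * ‖P‖ := add_le_add norm_one_le_one hAYP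
  have main : ‖(1 - Q * Aᵀ * X * A) * (Q - P) * (1 - Aᵀ * Y * A * P)‖
      ≤ (1 + ‖Q‖ * ‖A‖ ^ 2 * ‖Γ⁻¹‖) * ‖Q - P‖ * (1 + ‖A‖ ^ 2 * ‖Γ⁻¹‖ * ‖P‖) := by
    calc ‖(1 - Q * Aᵀ * X * A) * (Q - P) * (1 - Aᵀ * Y * A * P)‖
        ≤ ‖(1 - Q * Aᵀ * X * A) * (Q - P)‖ * ‖(1 - Aᵀ * Y * A * P)‖ := norm_mul_le _ _
      _ ≤ (‖(1 - Q * Aᵀ * X * A)‖ * ‖Q - P‖) * ‖(1 - Aᵀ * Y * A * P)‖ :=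
          mul_le_mul_of_nonneg_right (norm_mul_le _ _) (norm_nonneg _)
      _ ≤ (1 + ‖Q‖ * ‖A‖ ^ 2 * ‖Γ⁻¹‖) * ‖Q - P‖ * (1 + ‖A‖ ^ 2 * ‖Γ⁻¹‖ * ‖P‖) := by
          have h3 := norm_nonneg (Q - P)
          refine mul_le_mul (mul_le_mul_of_nonneg_right hL h3) hR (norm_nonneg _) ?_
          positivity
  refine main.trans ?_
  have h3 := norm_nonneg (Q - P)
  nlinarith [sq_nonneg (‖A‖^2 * ‖Γ⁻¹‖)]
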